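/- Let ρ(u) = √(u(4−u))/(2πu) for u ∈ (0,4] (the Marchenko–Pastur density) and let L > 0. Then as t → 0⁺, L − ∫₀⁴ max( L·ρ(u) − t/(2π), 0 ) du = 2t/π + O(t³); in particular lim_{t→0⁺} (1/t)·( L − ∫₀⁴ max( L·ρ(u) − t/(2π), 0 ) du ) = 2/π. -/

import Mathlib

open MeasureTheory Real Filter Asymptotics

/-- The Marchenko–Pastur density `ρ(u) = √(u(4−u))/(2πu)` on `(0, 4]`. -/
noncomputable def rhoMP (u : ℝ) : ℝ :=
  Real.sqrt (u * (4 - u)) / (2 * Real.pi * u)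

lemma arctan_bounds {x : ℝ} (hx : 0 ≤ x) :
    Real.arctan x ≤ x ∧ x - Real.arctan x ≤ x^3 := by
  have hcont : Continuous fun s : ℝ => 1 / (1 + s^2) :=
    continuous_const.div (by continuity) (fun s => by positivity)
  have hint : IntervalIntegrable (fun s : ℝ => 1 / (1 + s^2)) volume 0 x :=
    hcont.intervalIntegrable 0 x
  have h1 : x - Real.arctan x = ∫ s in (0:ℝ)..x, (1 - 1 / (1 + s^2)) := by
    rw [intervalIntegral.integral_sub (intervalIntegrable_const) hint]
    simp [integral_one_div_one_add_sq]
  constructor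
  · have h0 : (0:ℝ) ≤ x - Real.arctan x := by
      rw [h1]
      apply intervalIntegral.integral_nonneg hx
      intro s hs
      have : 1 / (1 + s^2) ≤ 1 := by
        rw [div_le_one (by positivity)]; nlinarith
      linarith
    linarith
  · rw [h1]
    calc (∫ s in (0:ℝ)..x, (1 - 1 / (1 + s^2)))
        ≤ ∫ s in (0:ℝ)..x, x^2 := by
          apply intervalIntegral.integral_mono_on hx
            (intervalIntegrable_const.sub hint) intervalIntegrable_const
          intro s hs
          have h2 : 1 - 1/(1+s^2) = s^2/(1+s^2) := by
            field_simp
            ring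
          rw [h2]
          have : s^2/(1+s^2) ≤ s^2 := by
            apply div_le_self (by positivity) (by nlinarith)
          nlinarith [hs.1, hs.2, sq_nonneg s]
      _ = x^3 := by simp [mul_comm]; ring

lemma rhoMP_meas : Measurable rhoMP := by
  unfold rhoMP; fun_prop

lemma rhoMP_intable {b : ℝ} (hb : 0 ≤ b) :
    IntervalIntegrable rhoMP volume 0 b := by
  rw [intervalIntegrable_iff_integrableOn_Ioc_of_le hb]
  have hbig : IntegrableOn (fun u : ℝ => (1/Real.pi) * u ^ (-(1:ℝ)/2)) (Set.Ioc 0 b) := by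
    have := (intervalIntegral.intervalIntegrable_rpow' (a := 0) (b := b)
      (show (-1:ℝ) < -(1:ℝ)/2 by norm_num)).const_mul (1/Real.pi)
    rwa [intervalIntegrable_iff_integrableOn_Ioc_of_le hb] at this
  apply hbig.mono' rhoMP_meas.aestronglyMeasurable.restrict
  filter_upwards [ae_restrict_mem measurableSet_Ioc] with u hu
  obtain ⟨hu0, hub⟩ := hu
  have hsq : Real.sqrt (u * (4 - u)) ≤ 2 * Real.sqrt u := by
    have h4 : Real.sqrt (4 * u) = 2 * Real.sqrt u := by
      rw [Real.sqrt_mul (by norm_num : (0:ℝ) ≤ 4) u,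
        show Real.sqrt 4 = 2 by
          rw [show (4:ℝ) = 2^2 by norm_num]; exact Real.sqrt_sq (by norm_num)]
    calc Real.sqrt (u * (4 - u)) ≤ Real.sqrt (4 * u) :=
          Real.sqrt_le_sqrt (by nlinarith)
      _ = 2 * Real.sqrt u := h4
  have hrpow : u ^ (-(1:ℝ)/2) = 1 / Real.sqrt u := by
    rw [show -(1:ℝ)/2 = -(1/2) by ring, Real.rpow_neg hu0.le, ← Real.sqrt_eq_rpow,
      one_div]
  have hsu : 0 < Real.sqrt u := Real.sqrt_pos.mpr hu0
  have hrho : rhoMP u = Real.sqrt (u * (4 - u)) / (2 * Real.pi * u) := rfl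
  rw [Real.norm_eq_abs, abs_of_nonneg (by unfold rhoMP; positivity), hrho, hrpow]
  rw [div_le_iff₀ (by positivity)]
  calc Real.sqrt (u * (4 - u)) ≤ 2 * Real.sqrt u := hsq
    _ = 1/Real.pi * (1/Real.sqrt u) * (2 * Real.pi * u) := by
        field_simp
        nlinarith [Real.mul_self_sqrt hu0.le, Real.pi_pos]

lemma tu_le {L t u : ℝ} (hL : 0 < L) (ht : 0 < t) (hu0 : 0 < u)
    (hua : u * (L^2 + t^2) ≤ 4 * L^2) :
    t * u ≤ L * Real.sqrt (u * (4 - u)) := by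
  have hkey : t^2 * u^2 ≤ L^2 * (u * (4 - u)) := by nlinarith
  have e1 : Real.sqrt (t^2 * u^2) = t * u := by
    rw [show t^2*u^2 = (t*u)^2 by ring]; exact Real.sqrt_sq (by positivity)
  have e2 : Real.sqrt (L^2 * (u * (4 - u))) = L * Real.sqrt (u * (4 - u)) := by
    rw [Real.sqrt_mul (by positivity), Real.sqrt_sq hL.le]
  calc t * u = Real.sqrt (t^2 * u^2) := e1.symm
    _ ≤ Real.sqrt (L^2 * (u * (4 - u))) := Real.sqrt_le_sqrt hkey
    _ = L * Real.sqrt (u * (4 - u)) := e2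

lemma tu_ge {L t u : ℝ} (hL : 0 < L) (ht : 0 < t) (hu0 : 0 < u) (hu4 : u ≤ 4)
    (hua : 4 * L^2 ≤ u * (L^2 + t^2)) :
    L * Real.sqrt (u * (4 - u)) ≤ t * u := by
  have hkey : L^2 * (u * (4 - u)) ≤ t^2 * u^2 := by nlinarith
  have e1 : Real.sqrt (t^2 * u^2) = t * u := by
    rw [show t^2*u^2 = (t*u)^2 by ring]; exact Real.sqrt_sq (by positivity)
  have e2 : Real.sqrt (L^2 * (u * (4 - u))) = L * Real.sqrt (u * (4 - u)) := by
    rw [Real.sqrt_mul (by positivity), Real.sqrt_sq hL.le]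
  calc L * Real.sqrt (u * (4 - u)) = Real.sqrt (L^2 * (u * (4 - u))) := e2.symm
    _ ≤ Real.sqrt (t^2 * u^2) := Real.sqrt_le_sqrt hkey
    _ = t * u := e1

lemma rho_ge {L t u : ℝ} (hL : 0 < L) (ht : 0 < t) (hu0 : 0 < u)
    (hua : u ≤ 4 * L^2 / (L^2 + t^2)) :
    t / (2 * Real.pi) ≤ L * rhoMP u := by
  have hD : (0:ℝ) < L^2 + t^2 := by positivity
  have h1 : u * (L^2 + t^2) ≤ 4 * L^2 := by
    rw [← le_div_iff₀ hD]; exact hua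
  have h2 := tu_le hL ht hu0 h1
  have : L * rhoMP u = (L * Real.sqrt (u * (4 - u))) / (2 * Real.pi * u) := by
    unfold rhoMP; ring
  rw [this, div_le_div_iff₀ (by positivity) (by positivity)]
  nlinarith [Real.pi_pos]

lemma rho_le {L t u : ℝ} (hL : 0 < L) (ht : 0 < t) (hu0 : 0 < u) (hu4 : u ≤ 4)
    (hua : 4 * L^2 / (L^2 + t^2) ≤ u) :
    L * rhoMP u ≤ t / (2 * Real.pi) := by
  have hD : (0:ℝ) < L^2 + t^2 := by positivity
  have h1 : 4 * L^2 ≤ u * (L^2 + t^2) := by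
    rw [← div_le_iff₀ hD]; exact hua
  have h2 := tu_ge hL ht hu0 hu4 h1
  have : L * rhoMP u = (L * Real.sqrt (u * (4 - u))) / (2 * Real.pi * u) := by
    unfold rhoMP; ring
  rw [this, div_le_div_iff₀ (by positivity) (by positivity)]
  nlinarith [Real.pi_pos]

noncomputable def phiMP (L t u : ℝ) : ℝ :=
  L / Real.pi * (Real.arcsin (u/2 - 1) + Real.sqrt (u * (4 - u)) / 2)
    - t / (2 * Real.pi) * u

lemma phiMP_cont (L t : ℝ) : Continuous (phiMP L t) := by
  unfold phiMP
  exact (continuous_const.mul ((Real.continuous_arcsin.comp (by continuity)).add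
    ((Real.continuous_sqrt.comp (by continuity)).div_const 2))).sub
    (continuous_const.mul continuous_id)

lemma phiMP_deriv (L t : ℝ) (hL : 0 < L) {x : ℝ} (hx0 : 0 < x) (hx4 : x < 4) :
    HasDerivAt (phiMP L t) (L * rhoMP x - t / (2 * Real.pi)) x := by
  set s := Real.sqrt (x * (4 - x)) with hs_def
  have hxpos : 0 < x * (4 - x) := by nlinarith
  have hs : 0 < s := Real.sqrt_pos.mpr hxpos
  have hs2 : s ^ 2 = x * (4 - x) := Real.sq_sqrt hxpos.le
  have harg1 : x/2 - 1 ≠ -1 := by intro h; nlinarith [h]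
  have harg2 : x/2 - 1 ≠ 1 := by intro h; nlinarith [h]
  have inner1 : HasDerivAt (fun u : ℝ => u/2 - 1) (1/2) x := by
    simpa using ((hasDerivAt_id x).div_const 2).sub_const 1
  have hA : HasDerivAt (fun u : ℝ => Real.arcsin (u/2 - 1))
      (1 / Real.sqrt (1 - (x/2 - 1)^2) * (1/2)) x :=
    by have h := (Real.hasDerivAt_arcsin harg1 harg2).comp x inner1; exact h
  have hsq_eq : Real.sqrt (1 - (x/2 - 1)^2) = s / 2 := by
    have e : 1 - (x/2 - 1)^2 = (s/2)^2 := by rw [div_pow, hs2]; ring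
    rw [e, Real.sqrt_sq (by positivity)]
  have hinner2 : HasDerivAt (fun u : ℝ => u * (4 - u)) (4 - 2*x) x := by
    have h := (hasDerivAt_id x).mul ((hasDerivAt_id x).const_sub 4)
    refine h.congr_deriv ?_
    simp only [id]; ring
  have hB : HasDerivAt (fun u : ℝ => Real.sqrt (u * (4 - u)))
      (1 / (2 * s) * (4 - 2*x)) x :=
    (Real.hasDerivAt_sqrt (ne_of_gt hxpos)).comp x hinner2
  have hC : HasDerivAt (fun u : ℝ => t / (2 * Real.pi) * u) (t / (2 * Real.pi)) x := by
    simpa using (hasDerivAt_id x).const_mul (t / (2 * Real.pi))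
  have hΦ : HasDerivAt (phiMP L t)
      (L / Real.pi * ((1 / Real.sqrt (1 - (x/2 - 1)^2) * (1/2))
        + (1 / (2 * s) * (4 - 2*x)) / 2) - t / (2 * Real.pi)) x :=
    ((hA.add (hB.div_const 2)).const_mul (L / Real.pi)).sub hC
  have heq : L / Real.pi * ((1 / Real.sqrt (1 - (x/2 - 1)^2) * (1/2))
        + (1 / (2 * s) * (4 - 2*x)) / 2) - t / (2 * Real.pi)
      = L * rhoMP x - t / (2 * Real.pi) := by
    rw [hsq_eq]
    unfold rhoMP
    rw [← hs_def]
    have hπ := Real.pi_ne_zero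
    have hx : x ≠ 0 := hx0.ne'
    have hsne : s ≠ 0 := hs.ne'
    field_simp
    linear_combination (-2*L) * hs2
  rwa [heq] at hΦ

lemma arcsin_id (L t : ℝ) (hL : 0 < L) (ht : 0 < t) :
    Real.arcsin ((L^2 - t^2)/(L^2 + t^2)) = Real.pi/2 - 2*Real.arctan (t/L) := by
  have hx : 0 < Real.arctan (t/L) := by
    rw [← Real.arctan_zero]; exact Real.arctan_strictMono (by positivity)
  have hx2 := Real.arctan_lt_pi_div_two (t/L)
  have hsin : Real.sin (Real.pi/2 - 2*Real.arctan (t/L)) = (L^2 - t^2)/(L^2 + t^2) := by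
    rw [Real.sin_pi_div_two_sub, Real.cos_two_mul', Real.cos_arctan, Real.sin_arctan]
    have h1 : Real.sqrt (1 + (t/L)^2) ^ 2 = 1 + (t/L)^2 := Real.sq_sqrt (by positivity)
    have h0 : Real.sqrt (1 + (t/L)^2) ≠ 0 := by positivity
    have hLne : L ≠ 0 := hL.ne'
    field_simp
    rw [Real.sq_sqrt (by positivity)]; field_simp
  rw [← hsin, Real.arcsin_sin (by linarith) (by linarith)]

lemma key_integral (L t : ℝ) (hL : 0 < L) (ht : 0 < t) :
    ∫ u in (0:ℝ)..4, max (L * rhoMP u - t / (2 * Real.pi)) 0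
      = L - 2 * L / Real.pi * Real.arctan (t / L) := by
  have hD : (0:ℝ) < L^2 + t^2 := by positivity
  set a : ℝ := 4 * L^2 / (L^2 + t^2) with ha_def
  have ha0 : 0 < a := by positivity
  have ha4 : a < 4 := by
    rw [ha_def, div_lt_iff₀ hD]; nlinarith
  set c := t / (2 * Real.pi) with hc_def
  set g : ℝ → ℝ := fun u => L * rhoMP u - c with hg_def
  have hgu : ∀ u, g u = L * rhoMP u - c := fun u => rfl
  have hg_int : IntervalIntegrable g volume 0 a := by
    rw [hg_def]
    exact ((rhoMP_intable ha0.le).const_mul L).sub intervalIntegrable_const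
  have hmax_eq : ∀ u ∈ Set.Ioc (0:ℝ) a, max (g u) 0 = g u := by
    intro u hu
    exact max_eq_left (sub_nonneg.mpr (rho_ge hL ht hu.1 hu.2))
  have hmax_eq2 : ∀ u ∈ Set.Icc a 4, max (g u) 0 = 0 := by
    intro u hu
    exact max_eq_right (sub_nonpos.mpr (rho_le hL ht (lt_of_lt_of_le ha0 hu.1) hu.2 hu.1))
  have hmax_int1 : IntervalIntegrable (fun u => max (g u) 0) volume 0 a := by
    rw [intervalIntegrable_iff_integrableOn_Ioc_of_le ha0.le] at hg_int ⊢
    exact hg_int.congr_fun (fun u hu => (hmax_eq u hu).symm) measurableSet_Ioc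
  have hmax_int2 : IntervalIntegrable (fun u => max (g u) 0) volume a 4 := by
    rw [intervalIntegrable_iff_integrableOn_Ioc_of_le ha4.le]
    have h0 : IntegrableOn (fun _ : ℝ => (0:ℝ)) (Set.Ioc a 4) := integrableOn_zero
    exact h0.congr_fun
      (fun u hu => (hmax_eq2 u (Set.Ioc_subset_Icc_self hu)).symm) measurableSet_Ioc
  have hsplit := intervalIntegral.integral_add_adjacent_intervals hmax_int1 hmax_int2
  have hzero : ∫ u in a..(4:ℝ), max (g u) 0 = 0 := by
    rw [intervalIntegral.integral_congr (g := fun _ => (0:ℝ))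
      (fun u hu => hmax_eq2 u (by rwa [Set.uIcc_of_le ha4.le] at hu))]
    simp
  have heq1 : ∫ u in (0:ℝ)..a, max (g u) 0 = ∫ u in (0:ℝ)..a, g u := by
    apply intervalIntegral.integral_congr_ae
    filter_upwards with u hu
    rw [Set.uIoc_of_le ha0.le] at hu
    exact hmax_eq u hu
  have hftc : ∫ u in (0:ℝ)..a, g u = phiMP L t a - phiMP L t 0 := by
    apply intervalIntegral.integral_eq_sub_of_hasDeriv_right_of_le ha0.le
      ((phiMP_cont L t).continuousOn)
      (fun x hx => ((phiMP_deriv L t hL hx.1 (hx.2.trans ha4)).hasDerivWithinAt))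
    exact hg_int
  have hphi0 : phiMP L t 0 = -(L/2) := by
    unfold phiMP
    simp [Real.arcsin_neg_one]
    field_simp
  have hsa : Real.sqrt (a * (4 - a)) = 4*L*t/(L^2+t^2) := by
    have e : a * (4 - a) = (4*L*t/(L^2+t^2))^2 := by
      rw [ha_def]; field_simp; ring
    rw [e, Real.sqrt_sq (by positivity)]
  have harg : a/2 - 1 = (L^2 - t^2)/(L^2+t^2) := by
    rw [ha_def]; field_simp; ring
  have hphia : phiMP L t a = L/2 - 2*L/Real.pi * Real.arctan (t/L) := by
    unfold phiMP
    rw [hsa, harg, arcsin_id L t hL ht, ha_def]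
    have hπ := Real.pi_ne_zero
    field_simp
    ring
  calc ∫ u in (0:ℝ)..4, max (g u) 0
      = (∫ u in (0:ℝ)..a, max (g u) 0) + ∫ u in a..(4:ℝ), max (g u) 0 := hsplit.symm
    _ = (phiMP L t a - phiMP L t 0) + 0 := by rw [hzero, heq1, hftc]
    _ = L - 2*L/Real.pi * Real.arctan (t/L) := by rw [hphia, hphi0]; ring

/-- Early-time behavior of the refined connected two-point form factor of the LUE:
as `t → 0⁺`, `L − ∫₀⁴ max(Lρ(u) − t/(2π), 0) du = 2t/π + O(t³)`; in particular
`lim_{t→0⁺} (1/t)(L − ∫₀⁴ max(Lρ(u) − t/(2π), 0) du) = 2/π`. -/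
theorem lue_refined_form_factor_slope (L : ℝ) (hL : 0 < L) :
    ((fun t : ℝ =>
        (L - ∫ u in (0:ℝ)..4, max (L * rhoMP u - t / (2 * Real.pi)) 0) - 2 * t / Real.pi)
      =O[nhdsWithin 0 (Set.Ioi 0)] (fun t : ℝ => t^3)) ∧
    Tendsto (fun t : ℝ =>
        (1 / t) * (L - ∫ u in (0:ℝ)..4, max (L * rhoMP u - t / (2 * Real.pi)) 0))
      (nhdsWithin 0 (Set.Ioi 0)) (nhds (2 / Real.pi)) := by
  have key : ∀ t : ℝ, 0 < t →
      L - ∫ u in (0:ℝ)..4, max (L * rhoMP u - t / (2 * Real.pi)) 0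
        = 2 * L / Real.pi * Real.arctan (t / L) := by
    intro t ht; rw [key_integral L t hL ht]; ring
  have hbound : ∀ t : ℝ, 0 < t →
      |(L - ∫ u in (0:ℝ)..4, max (L * rhoMP u - t / (2 * Real.pi)) 0) - 2 * t / Real.pi|
        ≤ 2 / (Real.pi * L^2) * t^3 := by
    intro t ht
    rw [key t ht]
    have hx : (0:ℝ) ≤ t / L := by positivity
    obtain ⟨h1, h2⟩ := arctan_bounds hx
    have e : 2 * L / Real.pi * Real.arctan (t/L) - 2 * t / Real.pi
        = -(2 * L / Real.pi * (t/L - Real.arctan (t/L))) := by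
      field_simp
      ring
    rw [e, abs_neg, abs_of_nonneg (mul_nonneg (by positivity) (sub_nonneg.mpr h1))]
    calc 2*L/Real.pi * (t/L - Real.arctan (t/L)) ≤ 2*L/Real.pi * (t/L)^3 :=
          mul_le_mul_of_nonneg_left h2 (by positivity)
      _ = 2/(Real.pi * L^2) * t^3 := by field_simp
  constructor
  · apply IsBigO.of_bound (2 / (Real.pi * L^2))
    filter_upwards [self_mem_nhdsWithin] with t ht
    have ht' : (0:ℝ) < t := ht
    rw [Real.norm_eq_abs, Real.norm_eq_abs]
    calc |(L - ∫ u in (0:ℝ)..4, max (L * rhoMP u - t / (2 * Real.pi)) 0) - 2 * t / Real.pi|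
        ≤ 2 / (Real.pi * L^2) * t^3 := hbound t ht'
      _ = 2 / (Real.pi * L^2) * |t^3| := by rw [abs_of_nonneg (by positivity)]
  · rw [← tendsto_sub_nhds_zero_iff]
    apply squeeze_zero_norm' (a := fun t : ℝ => 2 / (Real.pi * L^2) * t^2)
    · filter_upwards [self_mem_nhdsWithin] with t ht
      have ht' : (0:ℝ) < t := ht
      have e : (1 / t) * (L - ∫ u in (0:ℝ)..4, max (L * rhoMP u - t / (2 * Real.pi)) 0)
            - 2 / Real.pi
          = (1 / t) * ((L - ∫ u in (0:ℝ)..4, max (L * rhoMP u - t / (2 * Real.pi)) 0)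
            - 2 * t / Real.pi) := by
        set I := ∫ u in (0:ℝ)..4, max (L * rhoMP u - t / (2 * Real.pi)) 0 with hI
        field_simp
      rw [Real.norm_eq_abs, e, abs_mul]
      calc |1/t| * |(L - ∫ u in (0:ℝ)..4, max (L * rhoMP u - t / (2 * Real.pi)) 0)
            - 2 * t / Real.pi|
          ≤ (1/t) * (2 / (Real.pi * L^2) * t^3) := by
            apply mul_le_mul (le_of_eq (abs_of_pos (by positivity))) (hbound t ht')
              (abs_nonneg _) (by positivity)
        _ = 2 / (Real.pi * L^2) * t^2 := by field_simp
    · have hc : Continuous (fun t : ℝ => 2 / (Real.pi * L^2) * t^2) := by continuity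
      have h0 := (hc.tendsto 0).mono_left (nhdsWithin_le_nhds (s := Set.Ioi (0:ℝ)))
      simpa using h0
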